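/- For fixed y in (0,1] and r in (0,1], the function μ ↦ M_B(μ + r(y - μ), μ) is non-decreasing with respect to μ on the interval (0, y). -/

import Mathlib

/-- `M_B(z, θ) = z·ln(θ/z) + (1−z)·ln((1−θ)/(1−z))`.  Thanks to `Real.log 0 = 0`
and `0 * x = 0`, this formula also realizes the conventions
`M_B(0,θ) = ln(1−θ)` and `M_B(1,θ) = ln θ`. -/
noncomputable def MB (z θ : ℝ) : ℝ :=
  z * Real.log (θ / z) + (1 - z) * Real.log ((1 - θ) / (1 - z))

/-- Derivative of the auxiliary (log-expanded) form of `μ ↦ M_B(μ + r(y−μ), μ)`. -/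
lemma mb_hasDeriv (y r μ : ℝ) (hμ0 : 0 < μ) (hμ1 : μ < 1)
    (hz0 : 0 < μ + r*(y-μ)) (hz1 : μ + r*(y-μ) < 1) :
    HasDerivAt (fun t : ℝ => (t + r*(y-t)) * (Real.log t - Real.log (t + r*(y-t)))
      + (1 - (t + r*(y-t))) * (Real.log (1-t) - Real.log (1 - (t + r*(y-t)))))
      ((1-r) * (Real.log μ - Real.log (μ + r*(y-μ)) - Real.log (1-μ)
        + Real.log (1 - (μ + r*(y-μ))))
        + (μ + r*(y-μ))/μ - (1 - (μ + r*(y-μ)))/(1-μ)) μ := by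
  set z := μ + r*(y-μ) with hzdef
  have hz : HasDerivAt (fun t : ℝ => t + r*(y-t)) (1-r) μ := by
    have := (hasDerivAt_id μ).add (((hasDerivAt_const μ y).sub (hasDerivAt_id μ)).const_mul r)
    exact this.congr_deriv (by ring)
  have hlogμ : HasDerivAt (fun t : ℝ => Real.log t) μ⁻¹ μ := Real.hasDerivAt_log hμ0.ne'
  have hlogz : HasDerivAt (fun t : ℝ => Real.log (t + r*(y-t))) ((1-r)/z) μ :=
    hz.log hz0.ne'
  have h1μ : HasDerivAt (fun t : ℝ => (1:ℝ) - t) (-1) μ := by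
    simpa using (hasDerivAt_id' μ).const_sub (1:ℝ)
  have hlog1μ : HasDerivAt (fun t : ℝ => Real.log (1-t)) ((-1)/(1-μ)) μ :=
    h1μ.log (by linarith)
  have h1z : HasDerivAt (fun t : ℝ => (1:ℝ) - (t + r*(y-t))) (-(1-r)) μ := by
    simpa using hz.const_sub (1:ℝ)
  have hlog1z : HasDerivAt (fun t : ℝ => Real.log (1 - (t + r*(y-t)))) ((-(1-r))/(1-z)) μ :=
    h1z.log (by linarith)
  have hA := hz.mul (hlogμ.sub hlogz)
  have hB := h1z.mul (hlog1μ.sub hlog1z)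
  have := hA.add hB
  refine this.congr_deriv ?_
  have hzne : z ≠ 0 := hz0.ne'
  have h1zne : (1:ℝ) - z ≠ 0 := by linarith
  have h1μne : (1:ℝ) - μ ≠ 0 := by linarith
  simp only [Pi.sub_apply, ← hzdef]
  field_simp
  ring

/-- The derivative above is nonnegative on `(0, y)`. -/
lemma mb_deriv_nonneg (y r μ : ℝ) (hy1 : y ≤ 1) (hr0 : 0 < r) (hr1 : r ≤ 1)
    (hμ0 : 0 < μ) (hμy : μ < y) (hμ1 : μ < 1) (hz1 : μ + r*(y-μ) < 1) :
    0 ≤ (1-r) * (Real.log μ - Real.log (μ + r*(y-μ)) - Real.log (1-μ)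
        + Real.log (1 - (μ + r*(y-μ))))
        + (μ + r*(y-μ))/μ - (1 - (μ + r*(y-μ)))/(1-μ) := by
  set z := μ + r*(y-μ) with hzdef
  have hμz : μ < z := by nlinarith
  have hz0 : 0 < z := lt_trans hμ0 hμz
  have h1z : 0 < 1 - z := by linarith
  have h1μ : 0 < 1 - μ := by linarith
  have hx : 0 < z*(1-μ)/(μ*(1-z)) := by positivity
  have hlog := Real.log_le_sub_one_of_pos hx
  have hlogeq : Real.log (z*(1-μ)/(μ*(1-z)))
      = Real.log z + Real.log (1-μ) - Real.log μ - Real.log (1-z) := by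
    rw [Real.log_div (by positivity) (by positivity), Real.log_mul hz0.ne' h1μ.ne',
      Real.log_mul hμ0.ne' h1z.ne']
    ring
  have hL : 1 - z*(1-μ)/(μ*(1-z)) ≤
      Real.log μ - Real.log z - Real.log (1-μ) + Real.log (1-z) := by
    rw [hlogeq] at hlog; linarith
  have hE : (1-r) * (1 - z*(1-μ)/(μ*(1-z))) + z/μ - (1-z)/(1-μ)
      = r^2*(y-μ)*(1-y) / (μ*(1-μ)*(1-z)) := by
    have hμne : μ ≠ 0 := hμ0.ne'
    have h1zne : 1 - z ≠ 0 := h1z.ne'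
    have h1μne : 1 - μ ≠ 0 := h1μ.ne'
    field_simp
    rw [hzdef]; ring
  have hEnn : 0 ≤ (1-r) * (1 - z*(1-μ)/(μ*(1-z))) + z/μ - (1-z)/(1-μ) := by
    rw [hE]
    have : 0 ≤ r^2*(y-μ)*(1-y) :=
      mul_nonneg (mul_nonneg (sq_nonneg r) (by linarith)) (by linarith)
    positivity
  nlinarith [mul_le_mul_of_nonneg_left hL (by linarith : (0:ℝ) ≤ 1-r)]

/-- For fixed `y ∈ (0,1]` and `r ∈ (0,1]`, the map `μ ↦ M_B(μ + r(y − μ), μ)`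
is non-decreasing on `(0, y)`. -/
theorem mb_shift_monotone (y r : ℝ) (hy0 : 0 < y) (hy1 : y ≤ 1)
    (hr0 : 0 < r) (hr1 : r ≤ 1) :
    MonotoneOn (fun μ : ℝ => MB (μ + r * (y - μ)) μ) (Set.Ioo 0 y) := by
  by_cases hcase : r = 1 ∧ y = 1
  · -- degenerate case: z = 1 for all μ, and the function is just `log μ`.
    obtain ⟨hr, hy⟩ := hcase
    subst hr; subst hy
    intro a ha b hb hab
    have hz : ∀ t : ℝ, t + 1 * (1 - t) = 1 := by intro t; ring
    simp only [hz, MB]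
    simp only [sub_self, Real.log_zero, zero_div, mul_zero, add_zero,
      Real.log_div (by norm_num : (1:ℝ) ≠ 0), one_mul]
    have h1 : Real.log a ≤ Real.log b :=
      Real.log_le_log ha.1 hab
    simp only [div_one]
    linarith
  · -- main case: 0 < z < 1 on (0, y).
    have hrylt : r < 1 ∨ y < 1 := by
      rcases lt_or_eq_of_le hr1 with h | h
      · exact Or.inl h
      · rcases lt_or_eq_of_le hy1 with h' | h'
        · exact Or.inr h'
        · exact absurd ⟨h, h'⟩ hcase
    have hz1 : ∀ μ ∈ Set.Ioo (0:ℝ) y, μ + r*(y-μ) < 1 := by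
      intro μ hμ
      rcases hrylt with h | h
      · nlinarith [hμ.1, hμ.2]
      · nlinarith [hμ.1, hμ.2]
    have hz0 : ∀ μ ∈ Set.Ioo (0:ℝ) y, 0 < μ + r*(y-μ) := by
      intro μ hμ; nlinarith [hμ.1, hμ.2]
    set g : ℝ → ℝ := fun t => (t + r*(y-t)) * (Real.log t - Real.log (t + r*(y-t)))
      + (1 - (t + r*(y-t))) * (Real.log (1-t) - Real.log (1 - (t + r*(y-t)))) with hg
    have hmono : MonotoneOn g (Set.Ioo 0 y) := by
      apply monotoneOn_of_deriv_nonneg (convex_Ioo 0 y)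
      · intro μ hμ
        exact (mb_hasDeriv y r μ hμ.1 (lt_of_lt_of_le hμ.2 hy1) (hz0 μ hμ)
          (hz1 μ hμ)).continuousAt.continuousWithinAt
      · intro μ hμ
        rw [interior_Ioo] at hμ
        exact (mb_hasDeriv y r μ hμ.1 (lt_of_lt_of_le hμ.2 hy1) (hz0 μ hμ)
          (hz1 μ hμ)).differentiableAt.differentiableWithinAt
      · intro μ hμ
        rw [interior_Ioo] at hμ
        rw [(mb_hasDeriv y r μ hμ.1 (lt_of_lt_of_le hμ.2 hy1) (hz0 μ hμ)
          (hz1 μ hμ)).deriv]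
        exact mb_deriv_nonneg y r μ hy1 hr0 hr1 hμ.1 hμ.2
          (lt_of_lt_of_le hμ.2 hy1) (hz1 μ hμ)
    have heq : ∀ μ ∈ Set.Ioo (0:ℝ) y, MB (μ + r * (y - μ)) μ = g μ := by
      intro μ hμ
      have h0 : (0:ℝ) < μ := hμ.1
      have h1 : μ < 1 := lt_of_lt_of_le hμ.2 hy1
      have hz0' := hz0 μ hμ
      have hz1' := hz1 μ hμ
      simp only [MB, hg]
      rw [Real.log_div h0.ne' hz0'.ne',
        Real.log_div (by linarith : (1:ℝ) - μ ≠ 0) (by linarith : (1:ℝ) - (μ + r*(y-μ)) ≠ 0)]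
    intro a ha b hb hab
    simp only
    rw [heq a ha, heq b hb]
    exact hmono ha hb hab
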